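/- arXiv:2011.10436 — 3 statements merged into one kernel-verified Lean document; each statement's English description precedes it below -/
import Mathlib

section
/- For every n ≥ 3 and every chosen (n−2)-dimensional face ρ″ of σ, there exists a coloring c of χ(σ) with values in {0,…,n−1} such that: (1) for every face ρ′ of σ with dim(ρ′) ≤ n−3, c(χ(ρ′)) = ρ′; (2) c(χ(ρ″)) = ρ″, and c(χ(ρ′)) = {0,…,n−1} for every (n−2)-dimensional face ρ′ of σ with ρ′ ≠ ρ″; (3) c(χ(σ)) = {0,…,n−1} and no (n−1)-simplex of χ(σ) receives n distinct values under c. -/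
open scoped Classical

/-- Vertices of the ℓ-th chromatic subdivision of the standard simplex on `Fin n`. -/
def ChromV (n : ℕ) : ℕ → Type
  | 0 => Fin n
  | ℓ + 1 => Fin n × Finset (ChromV n ℓ)

instance chromVDecEq (n : ℕ) : ∀ ℓ, DecidableEq (ChromV n ℓ)
  | 0 => inferInstanceAs (DecidableEq (Fin n))
  | ℓ + 1 =>
    letI := chromVDecEq n ℓ
    inferInstanceAs (DecidableEq (Fin n × Finset (ChromV n ℓ)))

/-- The color of a vertex of the ℓ-th chromatic subdivision. -/
def chromCol (n : ℕ) : ∀ ℓ, ChromV n ℓ → Fin n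
  | 0, v => v
  | _ + 1, v => v.1

/-- `ids γ`: the set of colors of the vertices of a simplex `γ`. -/
def ids {n ℓ : ℕ} (γ : Finset (ChromV n ℓ)) : Finset (Fin n) :=
  γ.image (chromCol n ℓ)

/-- One step of standard chromatic subdivision of a set of (nonempty) simplexes. -/
def subdiv {α : Type} {n : ℕ} (col : α → Fin n) (K : Set (Finset α)) :
    Set (Finset (Fin n × Finset α)) :=
  { s | s.Nonempty ∧
    (∀ v ∈ s, v.2 ∈ K ∧ v.1 ∈ v.2.image col) ∧
    (∀ u ∈ s, ∀ v ∈ s, u ≠ v → u.1 ≠ v.1) ∧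
    (∀ u ∈ s, ∀ v ∈ s, u.2 ⊆ v.2 ∨ v.2 ⊆ u.2) ∧
    (∀ u ∈ s, ∀ v ∈ s, u.1 ∈ v.2.image col → u.2 ⊆ v.2) }

/-- The faces of a simplex `τ`: its nonempty subsets. -/
def facesOf {α : Type} (τ : Finset α) : Set (Finset α) :=
  { s | s.Nonempty ∧ s ⊆ τ }

/-- The ℓ-th chromatic subdivision `χ^ℓ(ρ)` of a face `ρ` of σ,
as a subcomplex of `χ^ℓ(σ)`. -/
def chromSub (n : ℕ) (ρ : Finset (Fin n)) : ∀ ℓ, Set (Finset (ChromV n ℓ))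
  | 0 => facesOf ρ
  | ℓ + 1 => subdiv (chromCol n ℓ) (chromSub n ρ ℓ)

/-- Iterated chromatic subdivision of a subcomplex sitting at level ℓ. -/
def iterSub (n ℓ : ℕ) : ∀ m, Set (Finset (ChromV n ℓ)) → Set (Finset (ChromV n (ℓ + m)))
  | 0, K => K
  | m + 1, K => subdiv (chromCol n (ℓ + m)) (iterSub n ℓ m K)

/-- `χ^m(τ)` for a simplex `τ ∈ χ^ℓ(σ)`: the subcomplex of `χ^{ℓ+m}(σ)` obtained by
iterated subdivision of `τ` and its faces. -/
def subOf {n ℓ : ℕ} (m : ℕ) (τ : Finset (ChromV n ℓ)) : Set (Finset (ChromV n (ℓ + m))) :=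
  iterSub n ℓ m (facesOf τ)

/-- The vertices of a subcomplex. -/
def vertexSet {n ℓ : ℕ} (L : Set (Finset (ChromV n ℓ))) : Set (ChromV n ℓ) :=
  { v | ∃ s ∈ L, v ∈ s }

/-- `c(L)`: the set of values taken by a coloring `c` on the vertices of a subcomplex `L`. -/
def colorSet {n ℓ : ℕ} {β : Type} (c : ChromV n ℓ → β) (L : Set (Finset (ChromV n ℓ))) :
    Set β :=
  c '' vertexSet L

/-- The carrier of a simplex `γ ∈ χ^ℓ(σ)`: the smallest face `ρ` of σ with `γ ∈ χ^ℓ(ρ)`,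
realized as the intersection of all such faces. -/
noncomputable def carr {n ℓ : ℕ} (γ : Finset (ChromV n ℓ)) : Finset (Fin n) :=
  Finset.univ.filter fun i => ∀ ρ : Finset (Fin n), γ ∈ chromSub n ρ ℓ → i ∈ ρ

/-- The set agreement valency map: `val(τ) = ids(τ)` if `|τ| ≤ n-2`, else `carr(τ)`. -/
noncomputable def saVal {n ℓ : ℕ} (τ : Finset (ChromV n ℓ)) : Finset (Fin n) :=
  if τ.card ≤ n - 2 then ids τ else carr τ

/-- The weak symmetry breaking valency map: `{1}` on simplexes of dimension ≤ n-3,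
`{0,1}` otherwise. -/
def wsbVal {n ℓ : ℕ} (τ : Finset (ChromV n ℓ)) : Set (Fin 2) :=
  if τ.card ≤ n - 2 then {1} else Set.univ

/-- The simplicial map on the ℓ-th chromatic subdivision induced functorially by a
map `f` on the colors/vertices of σ. -/
def vmap (n : ℕ) (f : Fin n → Fin n) : ∀ ℓ, ChromV n ℓ → ChromV n ℓ
  | 0, v => f v
  | ℓ + 1, v => (f v.1, v.2.image (vmap n f ℓ))

/-- The order-preserving bijection between two faces `s` and `t` of σ of the same
cardinality (extended by the identity elsewhere). -/
noncomputable def opBij {n : ℕ} (s t : Finset (Fin n)) (i : Fin n) : Fin n :=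
  if h : i ∈ s ∧ s.card = t.card then
    ↑(t.orderIsoOfFin rfl (Fin.cast h.2 ((s.orderIsoOfFin rfl).symm ⟨i, h.1⟩)))
  else i

/-- A coloring of `χ^L(σ)` is symmetric if it is invariant under the order-preserving
simplicial bijections between subdivided faces of σ of the same dimension. -/
def SymmColoring {n L : ℕ} {β : Type} (b : ChromV n L → β) : Prop :=
  ∀ s t : Finset (Fin n), s.Nonempty → t.Nonempty → s ≠ t → s.card = t.card →
    ∀ v ∈ vertexSet (chromSub n s L), b (vmap n (opBij s t) L v) = b v

/-- Transport of vertices along an equality of levels. -/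
def castV (n : ℕ) {a b : ℕ} (h : a = b) : ChromV n a → ChromV n b :=
  fun v => h ▸ v

/-! ### Auxiliary material for the construction -/

section Aux

variable {n : ℕ}

/-- The unique element missing from an `(n-1)`-element face (with default `z`). -/
noncomputable def kOf (z : Fin n) (τ : Finset (Fin n)) : Fin n :=
  if h : τᶜ.Nonempty then τᶜ.min' h else z

/-- The coloring: `k₀` on carriers equal to σ; on facets `σ \ {k}` with `k ≠ z`,
the value is `k₀` if `k = k₀`, `k` on the vertex of color `z`, the own color otherwise;
the own color on all smaller carriers. -/
noncomputable def myc (z k₀ : Fin n) (v : Fin n × Finset (Fin n)) : Fin n :=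
  if v.2 = Finset.univ then k₀
  else if v.2.card = n - 1 ∧ kOf z v.2 ≠ z then
    (if kOf z v.2 = k₀ then k₀ else if v.1 = z then kOf z v.2 else v.1)
  else v.1

lemma kOf_compl (hn : 1 ≤ n) (z : Fin n) {τ : Finset (Fin n)} (h : τ.card = n - 1) :
    τᶜ = {kOf z τ} := by
  have hc : τᶜ.card = 1 := by
    rw [Finset.card_compl, h, Fintype.card_fin]
    have := Finset.card_le_univ τ
    simp [Fintype.card_fin] at this
    omega
  obtain ⟨a, ha⟩ := Finset.card_eq_one.mp hc
  have hne : τᶜ.Nonempty := by rw [ha]; exact Finset.singleton_nonempty a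
  have haa : a ∈ τᶜ := by rw [ha]; exact Finset.mem_singleton_self a
  have hk : kOf z τ = a := by
    rw [kOf, dif_pos hne]
    refine le_antisymm (Finset.min'_le τᶜ a haa) (Finset.le_min' τᶜ hne a ?_)
    intro y hy
    rw [ha, Finset.mem_singleton] at hy
    exact le_of_eq hy.symm
  rw [hk, ha]

lemma kOf_not_mem (hn : 1 ≤ n) (z : Fin n) {τ : Finset (Fin n)} (h : τ.card = n - 1) :
    kOf z τ ∉ τ := by
  have h1 := kOf_compl hn z h
  have : kOf z τ ∈ τᶜ := by rw [h1]; exact Finset.mem_singleton_self _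
  simpa [Finset.mem_compl] using this

lemma chromCol_zero (v : Fin n) : chromCol n 0 v = v := rfl

lemma chromSub_one (ρ : Finset (Fin n)) :
    chromSub n ρ 1 = subdiv (chromCol n 0) (facesOf ρ) := rfl

lemma mem_vertexSet_one {ρ : Finset (Fin n)} {v : Fin n × Finset (Fin n)} :
    v ∈ vertexSet (chromSub n ρ 1) ↔ v.1 ∈ v.2 ∧ v.2 ⊆ ρ ∧ v.2.Nonempty := by
  constructor
  · rintro ⟨s, hs, hv⟩
    obtain ⟨-, hmem, -, -, -⟩ := hs
    obtain ⟨⟨hne, hsub⟩, hcol⟩ := hmem v hv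
    refine ⟨?_, hsub, hne⟩
    obtain ⟨a, ha, hav⟩ := Finset.mem_image.mp hcol
    have hav' : (a : Fin n) = v.1 := hav
    rw [← hav']; exact ha
  · rintro ⟨h1, h2, h3⟩
    refine ⟨{v}, ⟨⟨v, Finset.mem_singleton_self v⟩, ?_, ?_, ?_, ?_⟩, Finset.mem_singleton_self v⟩
    · intro u hu
      have hu : u = v := Finset.mem_singleton.mp hu; subst hu
      exact ⟨⟨h3, h2⟩, Finset.mem_image.mpr ⟨u.1, h1, rfl⟩⟩
    · intro u hu w hw hne
      have hu : u = v := Finset.mem_singleton.mp hu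
      have hw : w = v := Finset.mem_singleton.mp hw; subst hu; subst hw
      exact absurd rfl hne
    · intro u hu w hw
      have hu : u = v := Finset.mem_singleton.mp hu
      have hw : w = v := Finset.mem_singleton.mp hw; subst hu; subst hw
      exact Or.inl subset_rfl
    · intro u hu w hw _
      have hu : u = v := Finset.mem_singleton.mp hu
      have hw : w = v := Finset.mem_singleton.mp hw; subst hu; subst hw
      exact subset_rfl

lemma myc_reg {z k₀ : Fin n} {v : Fin n × Finset (Fin n)} (h1 : v.2 ≠ Finset.univ)
    (h2 : ¬(v.2.card = n - 1 ∧ kOf z v.2 ≠ z)) : myc z k₀ v = v.1 := by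
  rw [myc, if_neg h1, if_neg h2]

lemma myc_univ {z k₀ : Fin n} {v : Fin n × Finset (Fin n)} (h1 : v.2 = Finset.univ) :
    myc z k₀ v = k₀ := by
  rw [myc, if_pos h1]

lemma ne_univ_of_card_lt {τ : Finset (Fin n)} (h : τ.card < n) : τ ≠ Finset.univ := by
  intro he
  rw [he, Finset.card_univ, Fintype.card_fin] at h
  omega

lemma myc_singleton (hn : 3 ≤ n) (z k₀ j : Fin n) : myc z k₀ (j, ({j} : Finset (Fin n))) = j := by
  have h1 : ({j} : Finset (Fin n)) ≠ Finset.univ :=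
    ne_univ_of_card_lt (by rw [Finset.card_singleton]; omega)
  have h2 : ¬((({j} : Finset (Fin n))).card = n - 1 ∧ kOf z ({j} : Finset (Fin n)) ≠ z) := by
    rintro ⟨h, -⟩
    rw [Finset.card_singleton] at h
    omega
  exact myc_reg h1 h2

/-- Common argument for the small faces and for ρ''. -/
lemma colorSet_of_sub (hn : 3 ≤ n) (z k₀ : Fin n) {ρ : Finset (Fin n)} (hne : ρ.Nonempty)
    (hreg : ∀ τ : Finset (Fin n), τ ⊆ ρ → τ.Nonempty →
      τ ≠ Finset.univ ∧ ¬(τ.card = n - 1 ∧ kOf z τ ≠ z)) :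
    colorSet (myc z k₀) (chromSub n ρ 1) = ↑ρ := by
  ext x
  constructor
  · rintro ⟨v, hv, rfl⟩
    obtain ⟨h1, h2, h3⟩ := mem_vertexSet_one.mp hv
    obtain ⟨hr1, hr2⟩ := hreg v.2 h2 h3
    rw [myc_reg hr1 hr2]
    exact h2 h1
  · intro hx
    rw [Finset.mem_coe] at hx
    exact ⟨(x, {x}), mem_vertexSet_one.mpr
      ⟨Finset.mem_singleton_self x, Finset.singleton_subset_iff.mpr hx,
        Finset.singleton_nonempty x⟩, myc_singleton hn z k₀ x⟩

/-- The key no-rainbow property. -/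
lemma no_rainbow (hn : 3 ≤ n) (z k₀ : Fin n) (hk₀z : k₀ ≠ z) :
    ∀ s : Finset (Fin n × Finset (Fin n)),
      s ∈ subdiv (fun i : Fin n => i) (facesOf (Finset.univ : Finset (Fin n))) →
      s.card = n → (s.image (myc z k₀)).card < n := by
  intro s hs hcard
  obtain ⟨hne, hmem, hinj, htot, hcarr⟩ := hs
  -- the colors of s are all of Fin n
  have hinjOn : Set.InjOn (Prod.fst : Fin n × Finset (Fin n) → Fin n) ↑s := by
    intro u hu v hv h
    by_contra hneq
    exact hinj u hu v hv hneq h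
  have himg : s.image Prod.fst = Finset.univ := by
    apply Finset.eq_univ_of_card
    rw [Finset.card_image_of_injOn hinjOn, hcard, Fintype.card_fin]
  have hex : ∀ i : Fin n, ∃ v, v ∈ s ∧ v.1 = i := by
    intro i
    have : i ∈ s.image Prod.fst := by rw [himg]; exact Finset.mem_univ i
    obtain ⟨v, hv, hv1⟩ := Finset.mem_image.mp this
    exact ⟨v, hv, hv1⟩
  choose f hfs hf1 using hex
  have hP1 : ∀ i : Fin n, i ∈ (f i).2 := by
    intro i
    obtain ⟨-, hcol⟩ := hmem (f i) (hfs i)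
    obtain ⟨a, ha, hav⟩ := Finset.mem_image.mp hcol
    exact (hav.trans (hf1 i)) ▸ ha
  have hP2 : ∀ i j : Fin n, (f i).2 ⊆ (f j).2 ∨ (f j).2 ⊆ (f i).2 :=
    fun i j => htot (f i) (hfs i) (f j) (hfs j)
  have hP3 : ∀ i j : Fin n, i ∈ (f j).2 → (f i).2 ⊆ (f j).2 := by
    intro i j h
    exact hcarr (f i) (hfs i) (f j) (hfs j)
      (Finset.mem_image.mpr ⟨i, h, (hf1 i).symm⟩)
  -- reduce to finding a collision
  by_contra hcon
  push_neg at hcon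
  have hceq : (s.image (myc z k₀)).card = s.card := by
    have h1 := Finset.card_image_le (s := s) (f := myc z k₀)
    omega
  have hInj : Set.InjOn (myc z k₀) ↑s := Finset.injOn_of_card_image_eq hceq
  set val : Fin n → Fin n := fun i => myc z k₀ (f i) with hval
  have valinj : Function.Injective val := by
    intro i j h
    have := hInj (Finset.mem_coe.mpr (hfs i)) (Finset.mem_coe.mpr (hfs j)) h
    rw [← hf1 i, ← hf1 j, this]
  -- the set of colors with "regular" carriers
  set W : Finset (Fin n) := Finset.univ.filter
    (fun i => (f i).2 ≠ Finset.univ ∧ ¬((f i).2.card = n - 1 ∧ kOf z (f i).2 ≠ z)) with hW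
  have hWmem : ∀ i : Fin n, i ∈ W ↔
      ((f i).2 ≠ Finset.univ ∧ ¬((f i).2.card = n - 1 ∧ kOf z (f i).2 ≠ z)) := by
    intro i; rw [hW, Finset.mem_filter]; simp
  have hvalW : ∀ i ∈ W, val i = i := by
    intro i hi
    obtain ⟨h1, h2⟩ := (hWmem i).mp hi
    rw [hval]
    simp only
    rw [myc_reg h1 h2, hf1]
  have hcardlt : ∀ i : Fin n, (f i).2 ≠ Finset.univ → (f i).2.card ≤ n - 1 := by
    intro i h
    have h1 : (f i).2.card ≤ n := by
      have := Finset.card_le_univ (f i).2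
      simpa [Fintype.card_fin] using this
    have h2 : (f i).2.card ≠ n := by
      intro he
      exact h (Finset.eq_univ_of_card _ (by rw [he, Fintype.card_fin]))
    omega
  have hclose : ∀ i ∈ W, ∀ x ∈ (f i).2, x ∈ W := by
    intro i hi x hx
    obtain ⟨h1, h2⟩ := (hWmem i).mp hi
    have hsub : (f x).2 ⊆ (f i).2 := hP3 x i hx
    rw [hWmem]
    constructor
    · intro he
      rw [he] at hsub
      exact h1 (Finset.univ_subset_iff.mp hsub)
    · rintro ⟨hc, hk⟩
      have hle : n - 1 ≤ (f i).2.card := by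
        have := Finset.card_le_card hsub
        omega
      have hle2 : (f i).2.card ≤ n - 1 := hcardlt i h1
      have heq : (f x).2 = (f i).2 :=
        Finset.eq_of_subset_of_card_le hsub (by omega)
      exact h2 ⟨by rw [← heq]; exact hc, by rw [← heq]; exact hk⟩
  have hKout : ∀ i : Fin n, i ∉ W → val i ∉ W := by
    intro i hi hvi
    have h2 : val i = i := valinj (hvalW (val i) hvi)
    exact hi (h2 ▸ hvi)
  -- the colors with carrier a facet missing an element ≠ z
  set B : Finset (Fin n) := Finset.univ.filter
    (fun i => (f i).2.card = n - 1 ∧ kOf z (f i).2 ≠ z) with hB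
  have hBmem : ∀ i : Fin n, i ∈ B ↔ ((f i).2.card = n - 1 ∧ kOf z (f i).2 ≠ z) := by
    intro i; rw [hB, Finset.mem_filter]; simp
  have hpart : ∀ i : Fin n, i ∈ W ∨ i ∈ B ∨ (f i).2 = Finset.univ := by
    intro i
    by_cases h1 : (f i).2 = Finset.univ
    · exact Or.inr (Or.inr h1)
    by_cases h2 : (f i).2.card = n - 1 ∧ kOf z (f i).2 ≠ z
    · exact Or.inr (Or.inl ((hBmem i).mpr h2))
    · exact Or.inl ((hWmem i).mpr ⟨h1, h2⟩)
  rcases B.eq_empty_or_nonempty with hBe | ⟨i₁, hi₁⟩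
  · -- B is empty
    rcases W.eq_empty_or_nonempty with hWe | hWne
    · -- everything has carrier univ: val is constantly k₀, contradiction with n ≥ 3
      have hall : ∀ i : Fin n, val i = k₀ := by
        intro i
        rcases hpart i with h | h | h
        · rw [hWe] at h; exact absurd h (Finset.notMem_empty i)
        · rw [hBe] at h; exact absurd h (Finset.notMem_empty i)
        · rw [hval]; exact myc_univ h
      have h01 : (⟨0, by omega⟩ : Fin n) = ⟨1, by omega⟩ := by
        apply valinj
        rw [hall, hall]
      simp [Fin.ext_iff] at h01
    · -- W nonempty: its maximal carrier equals W itself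
      obtain ⟨i₀, hi₀, hmax⟩ := Finset.exists_max_image W (fun i => (f i).2.card) hWne
      have hWeq : (f i₀).2 = W := by
        apply Finset.Subset.antisymm
        · intro x hx; exact hclose i₀ hi₀ x hx
        · intro j hj
          rcases hP2 j i₀ with h | h
          · exact h (hP1 j)
          · have := hmax j hj
            have heq : (f i₀).2 = (f j).2 := Finset.eq_of_subset_of_card_le h this
            rw [heq]; exact hP1 j
      obtain ⟨h1, h2⟩ := (hWmem i₀).mp hi₀
      have hWne2 : W ≠ Finset.univ := by rw [← hWeq]; exact h1
      obtain ⟨a, ha⟩ : Wᶜ.Nonempty := by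
        apply Finset.card_pos.mp
        rw [Finset.card_compl, Fintype.card_fin]
        have h1 : W.card ≤ n := by
          have := Finset.card_le_univ W
          simpa [Fintype.card_fin] using this
        have h2 : W.card ≠ n := fun h =>
          hWne2 (Finset.eq_univ_of_card _ (by rw [h, Fintype.card_fin]))
        omega
      have haW : a ∉ W := Finset.mem_compl.mp ha
      have haU : (f a).2 = Finset.univ := by
        rcases hpart a with h | h | h
        · exact absurd h haW
        · rw [hBe] at h; exact absurd h (Finset.notMem_empty a)
        · exact h
      have hvala : val a = k₀ := by rw [hval]; exact myc_univ haU
      have hout : ∀ x : Fin n, x ∉ W → x = a := by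
        intro x hx
        have hxU : (f x).2 = Finset.univ := by
          rcases hpart x with h | h | h
          · exact absurd h hx
          · rw [hBe] at h; exact absurd h (Finset.notMem_empty x)
          · exact h
        apply valinj
        rw [hval]
        simp only
        rw [myc_univ hxU, myc_univ haU]
      have hWc : Wᶜ = {a} := by
        ext x
        rw [Finset.mem_compl, Finset.mem_singleton]
        exact ⟨fun h => hout x h, fun h => h ▸ haW⟩
      have hWcard : W.card = n - 1 := by
        have h1 := congrArg Finset.card hWc
        rw [Finset.card_compl, Finset.card_singleton, Fintype.card_fin] at h1
        have := Finset.card_le_univ W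
        simp [Fintype.card_fin] at this
        omega
      have hfcard : (f i₀).2.card = n - 1 := by rw [hWeq]; exact hWcard
      have hkz : kOf z (f i₀).2 = z := by
        by_contra hkz
        exact h2 ⟨hfcard, hkz⟩
      have hcompl : (f i₀).2ᶜ = {z} := by
        rw [kOf_compl (by omega) z hfcard, hkz]
      have haz : a = z := by
        have : ({a} : Finset (Fin n)) = {z} := by rw [← hWc, ← hcompl, hWeq]
        exact Finset.singleton_inj.mp this
      -- k₀ ∉ W, so k₀ = a = z, contradiction
      have : k₀ ∉ W := by
        have := hKout a haW
        rwa [hvala] at this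
      have : k₀ = a := hout k₀ this
      exact hk₀z (by rw [this, haz])
  · -- B nonempty
    obtain ⟨hc1, hk1⟩ := (hBmem i₁).mp hi₁
    set k := kOf z (f i₁).2 with hk
    have hknot : k ∉ (f i₁).2 := kOf_not_mem (by omega) z hc1
    have hfacet_eq : ∀ j : Fin n, j ∈ B → (f j).2 = (f i₁).2 := by
      intro j hj
      obtain ⟨hcj, -⟩ := (hBmem j).mp hj
      rcases hP2 j i₁ with h | h
      · exact Finset.eq_of_subset_of_card_le h (by omega)
      · exact (Finset.eq_of_subset_of_card_le h (by omega)).symm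
    have hi₁ne : (f i₁).2 ≠ Finset.univ := ne_univ_of_card_lt (by omega)
    have hkW : k ∉ W := by
      intro hkW
      obtain ⟨h1, h2⟩ := (hWmem k).mp hkW
      rcases hP2 k i₁ with h | h
      · exact hknot (h (hP1 k))
      · have hle : (f k).2.card ≤ n - 1 := hcardlt k h1
        have hge : n - 1 ≤ (f k).2.card := by
          have := Finset.card_le_card h
          omega
        have heq : (f i₁).2 = (f k).2 := Finset.eq_of_subset_of_card_le h (by omega)
        exact h2 ⟨by omega, by rw [← heq]; exact hk1⟩
    have hkB : k ∉ B := by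
      intro hkB
      have := hfacet_eq k hkB
      exact hknot (this ▸ hP1 k)
    have hkU : (f k).2 = Finset.univ := by
      rcases hpart k with h | h | h
      · exact absurd h hkW
      · exact absurd h hkB
      · exact h
    have hvalk : val k = k₀ := by rw [hval]; exact myc_univ hkU
    -- value of any j ∈ B
    have hvalB : ∀ j : Fin n, j ∈ B →
        val j = (if k = k₀ then k₀ else if j = z then k else j) := by
      intro j hj
      have heq := hfacet_eq j hj
      rw [hval]
      simp only
      rw [myc]
      rw [if_neg (by rw [heq]; exact hi₁ne)]
      rw [if_pos (by rw [heq]; exact ⟨hc1, hk1⟩)]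
      rw [hf1 j]
      have : kOf z (f j).2 = k := by rw [heq, hk]
      rw [this]
    by_cases hkk : k = k₀
    · -- then i₁ also takes value k₀, contradiction with val k = k₀
      have hv1 : val i₁ = k₀ := by rw [hvalB i₁ hi₁, if_pos hkk]
      have : i₁ = k := valinj (by rw [hv1, hvalk])
      exact hkB (this ▸ hi₁)
    · -- k ≠ k₀: find where k₀ lives
      have hk₀W : k₀ ∉ W := by
        have := hKout k hkW
        rwa [hvalk] at this
      rcases hpart k₀ with h | h | h
      · exact absurd h hk₀W
      · -- k₀ ∈ B: then val k₀ = k₀ = val k, so k₀ = k, contradiction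
        have hv : val k₀ = k₀ := by
          rw [hvalB k₀ h, if_neg hkk, if_neg hk₀z]
        have : k₀ = k := valinj (by rw [hv, hvalk])
        exact hkk this.symm
      · -- carrier of k₀ is univ: val k₀ = k₀ = val k
        have hv : val k₀ = k₀ := by rw [hval]; exact myc_univ h
        have : k₀ = k := valinj (by rw [hv, hvalk])
        exact hkk this.symm

end Aux


/-- Lemma on colorings of the first chromatic subdivision, case (2.b),
with a chosen (n-2)-dimensional face ρ''. -/
theorem exists_coloring_chromSub_one_sa_chosen_face
    (n : ℕ) (hn : 3 ≤ n) (ρ'' : Finset (Fin n)) (hρ'' : ρ''.card = n - 1) :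
    ∃ c : ChromV n 1 → Fin n,
      (∀ ρ' : Finset (Fin n), ρ'.Nonempty → ρ'.card ≤ n - 2 →
        colorSet c (chromSub n ρ' 1) = ↑ρ') ∧
      colorSet c (chromSub n ρ'' 1) = ↑ρ'' ∧
      (∀ ρ' : Finset (Fin n), ρ'.card = n - 1 → ρ' ≠ ρ'' →
        colorSet c (chromSub n ρ' 1) = Set.univ) ∧
      colorSet c (chromSub n Finset.univ 1) = Set.univ ∧
      (∀ s ∈ chromSub n Finset.univ 1, s.card = n → (s.image c).card < n) := by
  -- `z` is the vertex missing from ρ'', `k₀` a fixed vertex of ρ''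
  obtain ⟨zc, hz⟩ : ∃ zc : Fin n, ρ''ᶜ = {zc} := by
    apply Finset.card_eq_one.mp
    rw [Finset.card_compl, hρ'', Fintype.card_fin]
    have := Finset.card_le_univ ρ''
    simp [Fintype.card_fin] at this
    omega
  have hρne : ρ''.Nonempty := Finset.card_pos.mp (by rw [hρ'']; omega)
  set k₀ := ρ''.min' hρne with hk₀def
  have hk₀mem : k₀ ∈ ρ'' := Finset.min'_mem ρ'' hρne
  have hzout : zc ∉ ρ'' := by
    have : zc ∈ ρ''ᶜ := by rw [hz]; exact Finset.mem_singleton_self zc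
    exact Finset.mem_compl.mp this
  have hk₀z : k₀ ≠ zc := fun h => hzout (h ▸ hk₀mem)
  have hkOfρ : kOf zc ρ'' = zc := by
    have h2 := kOf_compl (n := n) (by omega) zc hρ''
    rw [hz] at h2
    exact (Finset.singleton_inj.mp h2).symm
  have hcard_univ : (Finset.univ : Finset (Fin n)).card = n := by
    rw [Finset.card_univ, Fintype.card_fin]
  refine ⟨fun v => myc zc k₀ v, ?_, ?_, ?_, ?_, ?_⟩
  · -- small faces
    intro ρ' hne hle
    apply colorSet_of_sub hn zc k₀ hne
    intro τ hsub htne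
    have hc : τ.card ≤ n - 2 := le_trans (Finset.card_le_card hsub) hle
    exact ⟨ne_univ_of_card_lt (by omega), fun h => by omega⟩
  · -- ρ'' itself
    apply colorSet_of_sub hn zc k₀ hρne
    intro τ hsub htne
    have hc : τ.card ≤ n - 1 := by
      have := Finset.card_le_card hsub
      omega
    refine ⟨ne_univ_of_card_lt (by omega), ?_⟩
    rintro ⟨h1, h2⟩
    have : τ = ρ'' := Finset.eq_of_subset_of_card_le hsub (by omega)
    rw [this, hkOfρ] at h2
    exact h2 rfl
  · -- the other facets: all colors appear
    intro ρ' hc' hne'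
    apply Set.eq_univ_of_univ_subset
    intro j _
    have hcmp : ρ'ᶜ = {kOf zc ρ'} := kOf_compl (by omega) zc hc'
    set k' := kOf zc ρ' with hk'
    have hk'z : k' ≠ zc := by
      intro h
      apply hne'
      have : ρ'ᶜ = ρ''ᶜ := by rw [hcmp, hz, h]
      have := congrArg (·ᶜ) this
      simpa using this
    have hzρ' : zc ∈ ρ' := by
      rw [← Finset.notMem_compl, hcmp, Finset.mem_singleton]
      exact fun h => hk'z h.symm
    by_cases hj : j ∈ ρ'
    · exact ⟨(j, {j}), mem_vertexSet_one.mpr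
        ⟨Finset.mem_singleton_self j, Finset.singleton_subset_iff.mpr hj,
          Finset.singleton_nonempty j⟩, myc_singleton hn zc k₀ j⟩
    · -- j = k', and the vertex (zc, ρ') has value k'
      have hjk : j = k' := by
        have : j ∈ ρ'ᶜ := Finset.mem_compl.mpr hj
        rw [hcmp, Finset.mem_singleton] at this
        exact this
      refine ⟨(zc, ρ'), mem_vertexSet_one.mpr
        ⟨hzρ', subset_rfl, Finset.card_pos.mp (by rw [hc']; omega)⟩, ?_⟩
      show myc zc k₀ (zc, ρ') = j
      rw [myc]
      simp only
      rw [if_neg (ne_univ_of_card_lt (by omega)), if_pos ⟨hc', hk'z⟩]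
      by_cases hkk : k' = k₀
      · rw [← hk', if_pos hkk, hjk, hkk]
      · rw [← hk', if_neg hkk]
        simp [hjk]
  · -- the whole simplex: all colors appear
    apply Set.eq_univ_of_univ_subset
    intro j _
    exact ⟨(j, {j}), mem_vertexSet_one.mpr
      ⟨Finset.mem_singleton_self j, Finset.subset_univ _,
        Finset.singleton_nonempty j⟩, myc_singleton hn zc k₀ j⟩
  · -- no rainbow simplex
    intro s hs hcard
    exact no_rainbow hn zc k₀ hk₀z s hs hcard
end

section
/- For every n ≥ 3 and every ℓ ≥ 1, the weak symmetry breaking valency task on χ^ℓ(σ) is locally solvable in one round: for every simplex τ ∈ χ^ℓ(σ) there exists a symmetric coloring b_τ of χ^{ℓ+1}(σ) with values in {0,1} that is consistent and complete with the weak symmetry breaking valency map val on χ^ℓ(σ), and such that no (n−1)-simplex of χ(τ) is b_τ-monochromatic (i.e., no (n−1)-simplex of χ(τ) has all its vertices assigned the same value by b_τ). -/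
open scoped Classical

open Finset in
lemma ids_mono {n ℓ : ℕ} {γ δ : Finset (ChromV n ℓ)} (h : γ ⊆ δ) : ids γ ⊆ ids δ :=
  Finset.image_subset_image h

lemma ids_subset_of_mem_chromSub {n : ℕ} {ρ : Finset (Fin n)} :
    ∀ {ℓ : ℕ} {γ : Finset (ChromV n ℓ)}, γ ∈ chromSub n ρ ℓ → ids γ ⊆ ρ
  | 0, γ, h => by
      intro i hi
      simp only [ids, Finset.mem_image] at hi
      obtain ⟨v, hv, rfl⟩ := hi
      exact h.2 hv
  | ℓ+1, γ, h => by
      intro i hi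
      simp only [ids, Finset.mem_image] at hi
      obtain ⟨v, hv, rfl⟩ := hi
      have h2 := h.2.1 v hv
      exact ids_subset_of_mem_chromSub h2.1 h2.2

lemma chromCol_vmap {n : ℕ} (f : Fin n → Fin n) :
    ∀ (ℓ) (v : ChromV n ℓ), chromCol n ℓ (vmap n f ℓ v) = f (chromCol n ℓ v)
  | 0, v => rfl
  | _+1, v => rfl

lemma ids_image_vmap {n ℓ : ℕ} (f : Fin n → Fin n) (γ : Finset (ChromV n ℓ)) :
    ids (γ.image (vmap n f ℓ)) = (ids γ).image f := by
  unfold ids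
  rw [Finset.image_image, Finset.image_image]
  apply Finset.image_congr
  intro v _
  exact chromCol_vmap f ℓ v

lemma rainbow {n ℓ' : ℕ} {ρ : Finset (Fin n)} {γ : Finset (ChromV n (ℓ'+1))}
    (h : γ ∈ chromSub n ρ (ℓ'+1)) {β : Finset (ChromV n (ℓ'+1))} (hβ : β ⊆ γ) :
    (ids β).card = β.card := by
  apply Finset.card_image_of_injOn
  intro u hu v hv huv
  by_contra hne
  exact h.2.2.1 u (hβ hu) v (hβ hv) hne huv

lemma exists_top {α : Type} {n : ℕ} {col : α → Fin n} {K : Set (Finset α)}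
    {s : Finset (Fin n × Finset α)} (hs : s ∈ subdiv col K) :
    ∃ w ∈ s, ∀ v ∈ s, v.2 ⊆ w.2 := by
  obtain ⟨hne, h1, h2, h3, h4⟩ := hs
  obtain ⟨w, hw, hmax⟩ := s.exists_max_image (fun v => v.2.card) hne
  refine ⟨w, hw, fun v hv => ?_⟩
  rcases h3 v hv w hw with h | h
  · exact h
  · exact (Finset.eq_of_subset_of_card_le h (hmax v hv)) ▸ Finset.Subset.refl _

lemma vertex_facts {n ℓ : ℕ} {τ' : Finset (ChromV n ℓ)} {x : Fin n × Finset (ChromV n ℓ)}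
    (hx : x ∈ vertexSet (subOf 1 τ')) : x.2.Nonempty ∧ x.2 ⊆ τ' ∧ x.1 ∈ ids x.2 := by
  obtain ⟨s, hs, hxs⟩ := hx
  have h1 := hs.2.1 x hxs
  exact ⟨h1.1.1, h1.1.2, h1.2⟩

lemma singleton_vertex_mem {n ℓ : ℕ} {τ' β : Finset (ChromV n ℓ)} (hβ : β.Nonempty)
    (hβτ : β ⊆ τ') {c : Fin n} (hc : c ∈ ids β) :
    ((c, β) : Fin n × Finset (ChromV n ℓ)) ∈ vertexSet (subOf 1 τ') := by
  refine ⟨({(c, β)} : Finset (Fin n × Finset (ChromV n ℓ))), ?_, Finset.mem_singleton_self _⟩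
  refine ⟨Finset.singleton_nonempty _, ?_, ?_, ?_, ?_⟩
  · intro v hv
    rw [Finset.mem_singleton] at hv
    subst hv
    exact ⟨⟨hβ, hβτ⟩, hc⟩
  · intro u hu v hv huv
    rw [Finset.mem_singleton] at hu hv
    subst hu; subst hv
    exact absurd rfl huv
  · intro u hu v hv
    rw [Finset.mem_singleton] at hu hv
    subst hu; subst hv
    exact Or.inl (Finset.Subset.refl _)
  · intro u hu v hv _
    rw [Finset.mem_singleton] at hu hv
    subst hu; subst hv
    exact Finset.Subset.refl _

lemma opBij_mem {n : ℕ} {s t : Finset (Fin n)} (hc : s.card = t.card) {i : Fin n}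
    (hi : i ∈ s) : opBij s t i ∈ t := by
  rw [opBij, dif_pos ⟨hi, hc⟩]
  exact Finset.coe_mem _

lemma opBij_strictMonoOn {n : ℕ} {s t : Finset (Fin n)} (hc : s.card = t.card) :
    StrictMonoOn (opBij s t) s := by
  intro i hi j hj hij
  rw [opBij, dif_pos ⟨hi, hc⟩, opBij, dif_pos ⟨hj, hc⟩]
  refine Subtype.coe_lt_coe.mpr ?_
  refine (OrderIso.lt_iff_lt _).mpr ?_
  refine (Fin.lt_def ..).mpr ?_
  simp only [Fin.coe_cast]
  refine (Fin.lt_def ..).mp ?_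
  exact (OrderIso.lt_iff_lt _).mpr (Subtype.mk_lt_mk.mpr hij)

lemma opBij_ne {n : ℕ} {s t : Finset (Fin n)} (hc : s.card = t.card) {c : Fin n}
    (hcs : c ∈ s) (hct : c ∉ t) (i : Fin n) : opBij s t i ≠ c := by
  intro h
  by_cases his : i ∈ s
  · exact hct (h ▸ opBij_mem hc his)
  · rw [opBij, dif_neg (fun hh => his hh.1)] at h
    exact his (h ▸ hcs)

noncomputable def defColor (n ℓ : ℕ) (v : ChromV n (ℓ+1)) : Fin 2 :=
  if n - 1 ≤ (ids v.2).card ∧ ∃ j ∈ ids v.2, j < v.1 then 0 else 1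

noncomputable def overColor (n ℓ : ℕ) (T A : Finset (ChromV n ℓ)) (i₀ : Fin n)
    (v : ChromV n (ℓ + 1)) : Fin 2 :=
  if v.2 = T then (if v.1 = i₀ then 1 else 0) else if v.2 = A then 0 else defColor n ℓ v

lemma defColor_vmap {n ℓ : ℕ} {s t : Finset (Fin n)} (hc : s.card = t.card)
    (v : ChromV n (ℓ+1)) (hids : ids v.2 ⊆ s) (hv1 : v.1 ∈ ids v.2) :
    defColor n ℓ (vmap n (opBij s t) (ℓ+1) v) = defColor n ℓ v := by
  have hvm : vmap n (opBij s t) (ℓ+1) v = (opBij s t v.1, v.2.image (vmap n (opBij s t) ℓ)) := rfl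
  rw [hvm]
  unfold defColor
  have hids2 : ids (v.2.image (vmap n (opBij s t) ℓ)) = (ids v.2).image (opBij s t) :=
    ids_image_vmap _ _
  have hcard : ((ids v.2).image (opBij s t)).card = (ids v.2).card :=
    Finset.card_image_of_injOn ((opBij_strictMonoOn hc).injOn.mono hids)
  have hiff : (∃ j ∈ (ids v.2).image (opBij s t), j < opBij s t v.1) ↔ ∃ j ∈ ids v.2, j < v.1 := by
    constructor
    · rintro ⟨j', hj', hlt⟩
      rw [Finset.mem_image] at hj'
      obtain ⟨j, hj, rfl⟩ := hj'
      exact ⟨j, hj, ((opBij_strictMonoOn hc).lt_iff_lt (hids hj) (hids hv1)).mp hlt⟩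
    · rintro ⟨j, hj, hlt⟩
      exact ⟨opBij s t j, Finset.mem_image_of_mem _ hj,
        ((opBij_strictMonoOn hc).lt_iff_lt (hids hj) (hids hv1)).mpr hlt⟩
  apply if_congr _ rfl rfl
  show n - 1 ≤ (ids ((opBij s t v.1, v.2.image (vmap n (opBij s t) ℓ)) :
    Fin n × Finset (ChromV n ℓ)).2).card ∧ _ ↔ _
  rw [show ((opBij s t v.1, v.2.image (vmap n (opBij s t) ℓ)) :
    Fin n × Finset (ChromV n ℓ)).2 = v.2.image (vmap n (opBij s t) ℓ) from rfl]
  rw [hids2, hcard]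
  exact and_congr Iff.rfl hiff

lemma overColor_symm {n ℓ' : ℕ} (T A : Finset (ChromV n (ℓ'+1))) (i₀ : Fin n)
    (hT : T = ∅ ∨ ∃ w ∈ T, ids w.2 = Finset.univ)
    (hA : A = ∅ ∨ ∃ w ∈ A, ids w.2 = Finset.univ) :
    SymmColoring (overColor n (ℓ'+1) T A i₀) := by
  intro s t hs ht hst hcard v hv
  have hsu : s ≠ Finset.univ := by
    rintro rfl
    exact hst (Finset.eq_univ_of_card t (by rw [← hcard, Finset.card_univ])).symm
  obtain ⟨c, hcs, hct⟩ : ∃ c, c ∈ s ∧ c ∉ t := by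
    by_contra h
    push_neg at h
    exact hst (Finset.eq_of_subset_of_card_le h (le_of_eq hcard.symm))
  obtain ⟨x, hx, hvx⟩ := hv
  have hmem := hx.2.1 v hvx
  have hv2 : v.2 ∈ chromSub n s (ℓ'+1) := hmem.1
  have hv1 : v.1 ∈ ids v.2 := hmem.2
  have hids : ids v.2 ⊆ s := ids_subset_of_mem_chromSub hv2
  have hv2ne : v.2.Nonempty := hv2.1
  -- boundary simplexes at level ℓ'+1 are not T or A
  have key : ∀ B : Finset (ChromV n (ℓ'+1)),
      (B = ∅ ∨ ∃ w ∈ B, ids w.2 = Finset.univ) → v.2 ≠ B := by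
    intro B hB hEq
    rcases hB with rfl | ⟨w, hw, hwids⟩
    · rw [hEq] at hv2ne
      exact hv2ne.ne_empty rfl
    · rw [hEq] at hv2
      have h2 : w.2 ∈ chromSub n s ℓ' := (hv2.2.1 w hw).1
      have h3 : ids w.2 ⊆ s := ids_subset_of_mem_chromSub h2
      rw [hwids] at h3
      exact hsu (Finset.univ_subset_iff.mp h3)
  -- images of level-(ℓ'+1) simplexes are not T or A
  have key2 : ∀ B : Finset (ChromV n (ℓ'+1)),
      (B = ∅ ∨ ∃ w ∈ B, ids w.2 = Finset.univ) →
      v.2.image (vmap n (opBij s t) (ℓ'+1)) ≠ B := by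
    intro B hB hEq
    rcases hB with rfl | ⟨w, hw, hwids⟩
    · exact (hv2ne.image _).ne_empty hEq
    · rw [← hEq] at hw
      obtain ⟨u, _, huw⟩ := Finset.mem_image.mp hw
      have hw2 : w.2 = u.2.image (vmap n (opBij s t) ℓ') := by rw [← huw]; rfl
      have : ids w.2 = (ids u.2).image (opBij s t) := by rw [hw2]; exact ids_image_vmap _ _
      rw [hwids] at this
      have hcmem : c ∈ (ids u.2).image (opBij s t) := this ▸ Finset.mem_univ c
      obtain ⟨j, _, hj⟩ := Finset.mem_image.mp hcmem
      exact opBij_ne hcard hcs hct j hj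
  have e1 : overColor n (ℓ'+1) T A i₀ v = defColor n (ℓ'+1) v := by
    unfold overColor
    rw [if_neg (key T hT), if_neg (key A hA)]
  have e2 : overColor n (ℓ'+1) T A i₀ (vmap n (opBij s t) (ℓ'+1+1) v) =
      defColor n (ℓ'+1) (vmap n (opBij s t) (ℓ'+1+1) v) := by
    have hsnd : (vmap n (opBij s t) (ℓ'+1+1) v).2 = v.2.image (vmap n (opBij s t) (ℓ'+1)) := rfl
    unfold overColor
    rw [if_neg (hsnd ▸ key2 T hT), if_neg (hsnd ▸ key2 A hA)]
  rw [e1, e2]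
  exact defColor_vmap hcard v hids hv1

lemma defColor_pair (n ℓ : ℕ) (c : Fin n) (β : Finset (ChromV n ℓ)) :
    defColor n ℓ (c, β) = if n - 1 ≤ (ids β).card ∧ ∃ j ∈ ids β, j < c then 0 else 1 := rfl

lemma overColor_spec {n ℓ' : ℕ} (hn : 3 ≤ n) (T A : Finset (ChromV n (ℓ'+1))) (i₀ : Fin n)
    (hcT : T = ∅ ∨ T.card = n) (hcA : A = ∅ ∨ A.card = n - 1) :
    ∀ τ' ∈ chromSub n Finset.univ (ℓ'+1),
      colorSet (overColor n (ℓ'+1) T A i₀) (subOf 1 τ') = wsbVal τ' := by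
  intro τ' hτ'
  set b := overColor n (ℓ'+1) T A i₀ with hb
  have hτ'ne : τ'.Nonempty := hτ'.1
  have hτ'rb : ∀ β ⊆ τ', (ids β).card = β.card := fun β h => rainbow hτ' h
  -- simplexes of small cardinality are never overridden
  have hnotT : ∀ β : Finset (ChromV n (ℓ'+1)), β.Nonempty → β.card ≠ n → β ≠ T := by
    intro β hne hcd hEq
    rcases hcT with rfl | hcT
    · exact hne.ne_empty hEq
    · exact hcd (hEq ▸ hcT)
  have hnotA : ∀ β : Finset (ChromV n (ℓ'+1)), β.Nonempty → β.card ≠ n - 1 → β ≠ A := by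
    intro β hne hcd hEq
    rcases hcA with rfl | hcA
    · exact hne.ne_empty hEq
    · exact hcd (hEq ▸ hcA)
  -- the one-vertex of a singleton
  have hone : (1 : Fin 2) ∈ colorSet b (subOf 1 τ') := by
    obtain ⟨v', hv'⟩ := hτ'ne
    have hcc : chromCol n (ℓ'+1) v' ∈ ids {v'} := by
      exact Finset.mem_image_of_mem _ (Finset.mem_singleton_self v')
    refine ⟨(chromCol n (ℓ'+1) v', {v'}), singleton_vertex_mem (Finset.singleton_nonempty _)
      (Finset.singleton_subset_iff.mpr hv') hcc, ?_⟩
    rw [hb]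
    unfold overColor
    rw [if_neg (hnotT _ (Finset.singleton_nonempty _) (by rw [Finset.card_singleton]; omega)),
      if_neg (hnotA _ (Finset.singleton_nonempty _) (by rw [Finset.card_singleton]; omega))]
    rw [defColor_pair]
    rw [if_neg]
    rintro ⟨h1, -⟩
    have : (ids ({v'} : Finset (ChromV n (ℓ'+1)))).card ≤ 1 :=
      le_trans Finset.card_image_le (le_of_eq (Finset.card_singleton _))
    omega
  by_cases hsm : τ'.card ≤ n - 2
  · -- small case: all colors are 1
    rw [wsbVal, if_pos hsm]
    apply Set.Subset.antisymm
    · rintro q ⟨x, hx, rfl⟩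
      obtain ⟨hxne, hxsub, hx1⟩ := vertex_facts hx
      have hcd : x.2.card ≤ n - 2 := le_trans (Finset.card_le_card hxsub) hsm
      show b x = 1
      rw [hb]
      unfold overColor
      rw [if_neg (hnotT _ hxne (by omega)), if_neg (hnotA _ hxne (by omega))]
      unfold defColor
      rw [if_neg]
      rintro ⟨h1, -⟩
      have := le_trans h1 (le_trans Finset.card_image_le (Finset.card_le_card hxsub))
      omega
    · intro q hq
      rw [Set.mem_singleton_iff] at hq
      exact hq ▸ hone
  · -- big case: both colors appear
    rw [wsbVal, if_neg hsm]
    apply Set.Subset.antisymm (Set.subset_univ _)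
    have hzero : (0 : Fin 2) ∈ colorSet b (subOf 1 τ') := by
      have hcard1 : (ids τ').card = τ'.card := hτ'rb τ' (Finset.Subset.refl _)
      have hcardge : n - 1 ≤ τ'.card := by
        have : τ'.card ≤ n := by
          rw [← hcard1]
          exact le_trans (Finset.card_le_univ _) (le_of_eq (by simp))
        omega
      by_cases hT' : τ' = T
      · -- pick a color ≠ i₀
        have h2 : 1 < (ids τ').card := by omega
        obtain ⟨c, hc, hci⟩ := Finset.exists_mem_ne h2 i₀
        refine ⟨(c, τ'), singleton_vertex_mem hτ'ne (Finset.Subset.refl _) hc, ?_⟩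
        show b (c, τ') = 0
        rw [hb]
        unfold overColor
        rw [if_pos hT', if_neg hci]
      · by_cases hA' : τ' = A
        · obtain ⟨c, hc⟩ : (ids τ').Nonempty := Finset.card_pos.mp (by omega)
          refine ⟨(c, τ'), singleton_vertex_mem hτ'ne (Finset.Subset.refl _) hc, ?_⟩
          show b (c, τ') = 0
          rw [hb]
          unfold overColor
          rw [if_neg (show (((c, τ') : Fin n × Finset (ChromV n (ℓ'+1)))).2 ≠ T from hT'),
            if_pos hA']
        · have h2 : 1 < (ids τ').card := by omega
          have hne' : (ids τ').Nonempty := Finset.card_pos.mp (by omega)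
          have hlt := Finset.min'_lt_max'_of_card _ h2
          refine ⟨((ids τ').max' hne', τ'),
            singleton_vertex_mem hτ'ne (Finset.Subset.refl _) (Finset.max'_mem _ _), ?_⟩
          show b ((ids τ').max' hne', τ') = 0
          rw [hb]
          unfold overColor
          rw [if_neg (show τ' ≠ T from hT'), if_neg (show τ' ≠ A from hA')]
          rw [defColor_pair]
          rw [if_pos]
          exact ⟨by omega, (ids τ').min' hne', Finset.min'_mem _ _, hlt⟩
    intro q _
    have : q = 0 ∨ q = 1 := by
      have : ∀ y : Fin 2, y = 0 ∨ y = 1 := by decide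
      exact this q
    rcases this with rfl | rfl
    · exact hzero
    · exact hone

/-- For every n ≥ 3 and ℓ ≥ 1, the weak symmetry breaking valency task
on χ^ℓ(σ) is locally solvable in one round. -/
theorem wsb_valency_task_locally_solvable
    (n ℓ : ℕ) (hn : 3 ≤ n) (hℓ : 1 ≤ ℓ)
    (τ : Finset (ChromV n ℓ)) (hτ : τ ∈ chromSub n Finset.univ ℓ) :
    ∃ b : ChromV n (ℓ + 1) → Fin 2,
      SymmColoring b ∧
      (∀ τ' ∈ chromSub n Finset.univ ℓ, colorSet b (subOf 1 τ') ⊆ wsbVal τ') ∧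
      (∀ τ' ∈ chromSub n Finset.univ ℓ, colorSet b (subOf 1 τ') = wsbVal τ') ∧
      (∀ s ∈ subOf 1 τ, s.card = n → ∃ u ∈ s, ∃ v ∈ s, b u ≠ b v) := by
  obtain ⟨ℓ', rfl⟩ : ∃ k, ℓ = k + 1 := ⟨ℓ - 1, by omega⟩
  haveI : NeZero n := ⟨by omega⟩
  -- color surjectivity for n-simplexes of χ(τ)
  have hsurjlem : ∀ s : Finset (Fin n × Finset (ChromV n (ℓ'+1))),
      s ∈ subOf 1 τ → s.card = n → ∀ c : Fin n, ∃ v ∈ s, v.1 = c := by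
    intro s hs hscard c
    have hinj : Set.InjOn Prod.fst (s : Set (Fin n × Finset (ChromV n (ℓ'+1)))) := by
      intro u hu v hv h
      by_contra hne
      exact hs.2.2.1 u hu v hv hne h
    have himg : s.image Prod.fst = Finset.univ := by
      apply Finset.eq_univ_of_card
      rw [Finset.card_image_of_injOn hinj, hscard]
      simp
    have : c ∈ s.image Prod.fst := himg ▸ Finset.mem_univ c
    obtain ⟨v, hv, h⟩ := Finset.mem_image.mp this
    exact ⟨v, hv, h⟩
  have h10 : (1 : Fin n) ≠ 0 := by
    have h1v : (1 : Fin n).val = 1 := by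
      rw [Fin.val_one']
      exact Nat.mod_eq_of_lt (by omega)
    intro h
    rw [h] at h1v
    simp at h1v
  by_cases hP : ids τ = Finset.univ
  · -- the interesting case: τ has all n colors
    have hτrb : ∀ β ⊆ τ, (ids β).card = β.card := fun β h => rainbow hτ h
    have hτcard : τ.card = n := by
      have h := hτrb τ (Finset.Subset.refl _)
      rw [hP] at h
      simp at h
      omega
    obtain ⟨w, hwτ, hwtop⟩ := exists_top hτ
    have hwids : ids w.2 = Finset.univ := by
      apply Finset.univ_subset_iff.mp
      rw [← hP]
      intro c hc
      obtain ⟨v, hv, rfl⟩ := Finset.mem_image.mp hc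
      exact ids_mono (hwtop v hv) (hτ.2.1 v hv).2
    set i₀ : Fin n := if w.1 = 0 then 1 else 0 with hi₀def
    have hi₀w : i₀ ≠ w.1 := by
      rw [hi₀def]
      split
      · rename_i h; rw [h]; exact h10
      · rename_i h; exact fun hh => h hh.symm
    have hi₀m : i₀ ∈ ids τ := hP ▸ Finset.mem_univ i₀
    obtain ⟨u₀, hu₀τ, hu₀c⟩ := Finset.mem_image.mp hi₀m
    set A : Finset (ChromV n (ℓ'+1)) := τ.erase u₀ with hAdef
    have hwu₀ : w ≠ u₀ := by
      intro h
      apply hi₀w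
      rw [← hu₀c, ← h]
      rfl
    have hwA : w ∈ A := Finset.mem_erase.mpr ⟨hwu₀, hwτ⟩
    have hAcard : A.card = n - 1 := by rw [hAdef, Finset.card_erase_of_mem hu₀τ, hτcard]
    have hAτ : A ≠ τ := by
      intro h
      have h2 := hAcard
      rw [h, hτcard] at h2
      omega
    have hidsA : ids A = Finset.univ.erase i₀ := by
      apply Finset.eq_of_subset_of_card_le
      · intro c hc
        obtain ⟨z, hz, rfl⟩ := Finset.mem_image.mp hc
        refine Finset.mem_erase.mpr ⟨?_, Finset.mem_univ _⟩
        intro h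
        have hzu : z ≠ u₀ := (Finset.mem_erase.mp hz).1
        exact hτ.2.2.1 z (Finset.mem_of_mem_erase hz) u₀ hu₀τ hzu (h.trans hu₀c.symm)
      · rw [Finset.card_erase_of_mem (Finset.mem_univ _), hτrb A (Finset.erase_subset _ _),
          hAcard]
        simp
    refine ⟨overColor n (ℓ'+1) τ A i₀, ?_, ?_, ?_, ?_⟩
    · exact overColor_symm τ A i₀ (Or.inr ⟨w, hwτ, hwids⟩) (Or.inr ⟨w, hwA, hwids⟩)
    · intro τ' hτ'
      exact le_of_eq (overColor_spec hn τ A i₀ (Or.inr hτcard) (Or.inr hAcard) τ' hτ')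
    · exact overColor_spec hn τ A i₀ (Or.inr hτcard) (Or.inr hAcard)
    · -- no monochromatic n-simplex in χ(τ)
      intro s hs hscard
      have hsurj := hsurjlem s hs hscard
      have hstop := exists_top hs
      obtain ⟨hsne, hs1, hs2, hs3, hs4⟩ := hs
      have hsub : ∀ v ∈ s, v.2 ⊆ τ ∧ v.1 ∈ ids v.2 := fun v hv =>
        ⟨(hs1 v hv).1.2, (hs1 v hv).2⟩
      set b := overColor n (ℓ'+1) τ A i₀ with hbdef
      have bT0 : ∀ v : Fin n × Finset (ChromV n (ℓ'+1)), v.2 = τ → v.1 ≠ i₀ → b v = 0 := by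
        intro v h1 h2
        rw [hbdef]
        unfold overColor
        rw [if_pos h1, if_neg h2]
      have bT1 : ∀ v : Fin n × Finset (ChromV n (ℓ'+1)), v.2 = τ → v.1 = i₀ → b v = 1 := by
        intro v h1 h2
        rw [hbdef]
        unfold overColor
        rw [if_pos h1, if_pos h2]
      have bA0 : ∀ v : Fin n × Finset (ChromV n (ℓ'+1)), v.2 = A → b v = 0 := by
        intro v h1
        rw [hbdef]
        unfold overColor
        rw [if_neg (h1 ▸ hAτ), if_pos h1]
      have bdefault : ∀ v : Fin n × Finset (ChromV n (ℓ'+1)), v.2 ≠ τ → v.2 ≠ A →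
          b v = defColor n (ℓ'+1) v := by
        intro v h1 h2
        rw [hbdef]
        unfold overColor
        rw [if_neg h1, if_neg h2]
      have h01 : (0 : Fin 2) ≠ 1 := by decide
      by_cases hx : ∃ x ∈ s, x.1 = i₀ ∧ x.2 = τ
      · obtain ⟨x, hxs, hx1, hx2⟩ := hx
        have hbx : b x = 1 := bT1 x hx2 hx1
        by_cases hy : ∃ y ∈ s, y.2 = τ ∧ y.1 ≠ i₀
        · obtain ⟨y, hys, hy2, hy1⟩ := hy
          exact ⟨y, hys, x, hxs, by rw [bT0 y hy2 hy1, hbx]; exact h01⟩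
        · push_neg at hy
          set K := s.filter (fun v => v.2 ≠ τ) with hKdef
          have hKne : K.Nonempty := by
            obtain ⟨y, hys, hy1⟩ := hsurj (if i₀ = 0 then 1 else 0)
            refine ⟨y, Finset.mem_filter.mpr ⟨hys, fun h2 => ?_⟩⟩
            have h3 := hy y hys h2
            rw [hy1] at h3
            revert h3
            split
            · rename_i h; rw [h]; exact h10
            · rename_i h; exact fun hh => h hh.symm
          obtain ⟨vA, hvAK, hvAmax⟩ := K.exists_max_image (fun v => v.2.card) hKne
          have hvAs : vA ∈ s := (Finset.mem_filter.mp hvAK).1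
          have hvAne : vA.2 ≠ τ := (Finset.mem_filter.mp hvAK).2
          have hvAtop : ∀ v ∈ K, v.2 ⊆ vA.2 := by
            intro v hv
            rcases hs3 v (Finset.mem_filter.mp hv).1 vA hvAs with h | h
            · exact h
            · exact (Finset.eq_of_subset_of_card_le h (hvAmax v hv)) ▸ Finset.Subset.refl _
          have hno : i₀ ∉ ids vA.2 := by
            intro hi
            have h5 := hs4 x hxs vA hvAs (by rw [hx1]; exact hi)
            exact hvAne (Finset.Subset.antisymm (hsub vA hvAs).1 (hx2 ▸ h5))
          have hidseq : ids vA.2 = Finset.univ.erase i₀ := by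
            apply Finset.Subset.antisymm
            · intro c hc
              exact Finset.mem_erase.mpr ⟨fun h => hno (h ▸ hc), Finset.mem_univ _⟩
            · intro c hc
              obtain ⟨hci, -⟩ := Finset.mem_erase.mp hc
              obtain ⟨y, hys, rfl⟩ := hsurj c
              have hyK : y ∈ K := Finset.mem_filter.mpr ⟨hys, fun h2 => hci (hy y hys h2)⟩
              exact ids_mono (hvAtop y hyK) (hsub y hys).2
          have hvA2 : vA.2 = A := by
            apply Finset.eq_of_subset_of_card_le
            · intro z hz
              refine Finset.mem_erase.mpr ⟨?_, (hsub vA hvAs).1 hz⟩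
              intro hzu
              apply hno
              rw [← hu₀c, ← hzu]
              exact Finset.mem_image_of_mem _ hz
            · have h1 : vA.2.card = n - 1 := by
                rw [← hτrb vA.2 (hsub vA hvAs).1, hidseq,
                  Finset.card_erase_of_mem (Finset.mem_univ _)]
                simp
              rw [hAcard, h1]
          exact ⟨vA, hvAs, x, hxs, by rw [bA0 vA hvA2, hbx]; exact h01⟩
      · push_neg at hx
        obtain ⟨vt, hvts, hvttop⟩ := hstop
        have hvt2 : vt.2 = τ := by
          have huniv : Finset.univ ⊆ ids vt.2 := by
            intro c _
            obtain ⟨v, hvs, rfl⟩ := hsurj c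
            exact ids_mono (hvttop v hvs) (hsub v hvs).2
          have hle : n ≤ vt.2.card := by
            calc n = (Finset.univ : Finset (Fin n)).card := by simp
            _ ≤ (ids vt.2).card := Finset.card_le_card huniv
            _ ≤ vt.2.card := Finset.card_image_le
          exact Finset.eq_of_subset_of_card_le (hsub vt hvts).1 (by rw [hτcard]; exact hle)
        have hvt1 : vt.1 ≠ i₀ := fun h => hx vt hvts h hvt2
        have hbvt : b vt = 0 := bT0 vt hvt2 hvt1
        set K := s.filter (fun v => v.2 ≠ τ) with hKdef
        by_cases hK : K.Nonempty
        · obtain ⟨vA, hvAK, hvAmax⟩ := K.exists_max_image (fun v => v.2.card) hK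
          have hvAs : vA ∈ s := (Finset.mem_filter.mp hvAK).1
          have hvAne : vA.2 ≠ τ := (Finset.mem_filter.mp hvAK).2
          have hvAtop : ∀ v ∈ K, v.2 ⊆ vA.2 := by
            intro v hv
            rcases hs3 v (Finset.mem_filter.mp hv).1 vA hvAs with h | h
            · exact h
            · exact (Finset.eq_of_subset_of_card_le h (hvAmax v hv)) ▸ Finset.Subset.refl _
          have hTCne : ∀ y ∈ s, y.2 = τ → y.1 ∉ ids vA.2 := by
            intro y hys hy2 hmem
            have h5 := hs4 y hys vA hvAs hmem
            exact hvAne (Finset.Subset.antisymm (hsub vA hvAs).1 (hy2 ▸ h5))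
          by_cases hbig : n - 1 ≤ (ids vA.2).card
          · -- ids vA.2 = univ.erase vt.1 and the min-colored vertex is colored 1
            have hsub' : ids vA.2 ⊆ Finset.univ.erase vt.1 := by
              intro c hc
              refine Finset.mem_erase.mpr ⟨?_, Finset.mem_univ _⟩
              intro h
              exact hTCne vt hvts hvt2 (h ▸ hc)
            have hidseq : ids vA.2 = Finset.univ.erase vt.1 := by
              apply Finset.eq_of_subset_of_card_le hsub'
              rw [Finset.card_erase_of_mem (Finset.mem_univ _)]
              simpa using hbig
            have hi₀K : i₀ ∈ ids vA.2 := by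
              obtain ⟨y, hys, hy1⟩ := hsurj i₀
              have hyK : y ∈ K := Finset.mem_filter.mpr ⟨hys, hx y hys hy1⟩
              exact hy1 ▸ ids_mono (hvAtop y hyK) (hsub y hys).2
            have hi₀vt : i₀ ≠ vt.1 := (Finset.mem_erase.mp (hidseq ▸ hi₀K)).1
            have hne' : (ids vA.2).Nonempty := ⟨i₀, hi₀K⟩
            set m := (ids vA.2).min' hne' with hmdef
            obtain ⟨ym, hyms, hym1⟩ := hsurj m
            have hmK : m ∈ ids vA.2 := Finset.min'_mem _ _
            have hymτ : ym.2 ≠ τ := fun h => hTCne ym hyms h (hym1 ▸ hmK)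
            have hymK : ym ∈ K := Finset.mem_filter.mpr ⟨hyms, hymτ⟩
            have hymsub : ids ym.2 ⊆ ids vA.2 := ids_mono (hvAtop ym hymK)
            have hymA : ym.2 ≠ A := by
              intro h
              have hvtA : vt.1 ∈ ids ym.2 := by
                rw [h, hidsA]
                exact Finset.mem_erase.mpr ⟨fun hh => hi₀vt hh.symm, Finset.mem_univ _⟩
              have h6 : vt.1 ∈ ids vA.2 := hymsub hvtA
              rw [hidseq] at h6
              exact (Finset.mem_erase.mp h6).1 rfl
            have hbm : b ym = 1 := by
              rw [bdefault ym hymτ hymA]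
              unfold defColor
              rw [if_neg]
              rintro ⟨-, j, hj, hjlt⟩
              rw [hym1] at hjlt
              exact absurd hjlt (not_lt.mpr (Finset.min'_le _ j (hymsub hj)))
            exact ⟨vt, hvts, ym, hyms, by rw [hbvt, hbm]; exact h01⟩
          · -- vA itself is colored 1
            have hvAA : vA.2 ≠ A := by
              intro h
              apply hbig
              rw [h, hidsA, Finset.card_erase_of_mem (Finset.mem_univ _)]
              simp
            have hbvA : b vA = 1 := by
              rw [bdefault vA hvAne hvAA]
              unfold defColor
              rw [if_neg]
              rintro ⟨h1, -⟩
              exact hbig h1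
            exact ⟨vt, hvts, vA, hvAs, by rw [hbvt, hbvA]; exact h01⟩
        · -- all vertices carry τ: contradiction with hx
          obtain ⟨y, hys, hy1⟩ := hsurj i₀
          have hy2 : y.2 = τ := by
            by_contra h
            exact hK ⟨y, Finset.mem_filter.mpr ⟨hys, h⟩⟩
          exact absurd hy2 (hx y hys hy1)
  · -- degenerate case : τ does not have all colors; no n-simplexes in χ(τ)
    refine ⟨overColor n (ℓ'+1) ∅ ∅ 0, ?_, ?_, ?_, ?_⟩
    · exact overColor_symm ∅ ∅ 0 (Or.inl rfl) (Or.inl rfl)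
    · intro τ' hτ'
      exact le_of_eq (overColor_spec hn ∅ ∅ 0 (Or.inl rfl) (Or.inl rfl) τ' hτ')
    · exact overColor_spec hn ∅ ∅ 0 (Or.inl rfl) (Or.inl rfl)
    · intro s hs hscard
      exfalso
      apply hP
      apply Finset.univ_subset_iff.mp
      intro c _
      obtain ⟨v, hvs, rfl⟩ := hsurjlem s hs hscard c
      exact ids_mono (hs.2.1 v hvs).1.2 (hs.2.1 v hvs).2
end

section
/- For every n ≥ 3 and ℓ ≥ 1, the set agreement valency map val on χ^ℓ(σ) satisfies containment: for all simplexes τ′, τ ∈ χ^ℓ(σ) with τ′ ⊆ τ, one has val(τ′) ⊆ val(τ) (i.e., val is a carrier map). -/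
open scoped Classical

lemma ids_subset_of_mem {n : ℕ} : ∀ ℓ (ρ : Finset (Fin n)) (γ : Finset (ChromV n ℓ)),
    γ ∈ chromSub n ρ ℓ → ids γ ⊆ ρ
  | 0, ρ, γ, h => by
      intro i hi
      rw [ids, Finset.mem_image] at hi
      obtain ⟨v, hv, rfl⟩ := hi
      exact h.2 hv
  | ℓ+1, ρ, γ, h => by
      intro i hi
      rw [ids, Finset.mem_image] at hi
      obtain ⟨v, hv, rfl⟩ := hi
      obtain ⟨hK, hcol⟩ := h.2.1 v hv
      exact ids_subset_of_mem ℓ ρ v.2 hK hcol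

lemma subdiv_down {α : Type} {n : ℕ} (col : α → Fin n) (K : Set (Finset α))
    {s t : Finset (Fin n × Finset α)} (hs : s ∈ subdiv col K) (ht : t ⊆ s)
    (htne : t.Nonempty) : t ∈ subdiv col K := by
  obtain ⟨_, h1, h2, h3, h4⟩ := hs
  exact ⟨htne, fun v hv => h1 v (ht hv), fun u hu v hv => h2 u (ht hu) v (ht hv),
    fun u hu v hv => h3 u (ht hu) v (ht hv), fun u hu v hv => h4 u (ht hu) v (ht hv)⟩

lemma ids_subset_carr {n ℓ : ℕ} (γ : Finset (ChromV n ℓ)) : ids γ ⊆ carr γ := by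
  intro i hi
  rw [carr, Finset.mem_filter]
  exact ⟨Finset.mem_univ i, fun ρ hρ => ids_subset_of_mem ℓ ρ γ hρ hi⟩

/-- Containment: the set agreement valency map is a carrier map. -/
theorem saVal_containment
    (n ℓ : ℕ) (hn : 3 ≤ n) (hℓ : 1 ≤ ℓ)
    (τ' τ : Finset (ChromV n ℓ))
    (hτ' : τ' ∈ chromSub n Finset.univ ℓ) (hτ : τ ∈ chromSub n Finset.univ ℓ)
    (hsub : τ' ⊆ τ) :
    saVal τ' ⊆ saVal τ := by
  obtain ⟨m, rfl⟩ : ∃ m, ℓ = m + 1 := ⟨ℓ - 1, by omega⟩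
  have hne' : τ'.Nonempty := hτ'.1
  have hids : ids τ' ⊆ ids τ := Finset.image_subset_image hsub
  have hcarr : carr τ' ⊆ carr τ := by
    intro i hi
    rw [carr, Finset.mem_filter] at hi ⊢
    refine ⟨Finset.mem_univ i, fun ρ hρ => hi.2 ρ ?_⟩
    exact subdiv_down _ _ hρ hsub hne'
  unfold saVal
  split_ifs with h1 h2 h2
  · exact hids
  · exact hids.trans (ids_subset_carr τ)
  · exact absurd (le_trans (Finset.card_le_card hsub) h2) h1
  · exact hcarr
end
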